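/- Quantum $(\mathfrak{gl}_M,\mathfrak{gl}_N)$-duality, simplest case: let $\mathcal{U}$ be the Weyl algebra on $x^a_i, \partial^a_i$ ($1\le a\le M$, $1\le i\le N$). Fix distinct $z_1,\dots,z_N$ and distinct $\lambda_1,\dots,\lambda_M$ in $\mathbb{C}$, and form the $(M+N)\times(M+N)$ matrix $\mathcal{M} = \begin{pmatrix} \mathrm{diag}(\partial_z - \lambda_a)_{a=1}^M & X \\ {}^tD & \mathrm{diag}(z - z_i)_{i=1}^N \end{pmatrix}$ with entries in $\mathcal{U}[z,\partial_z]$, where $X = (x^a_i)$ and $D = (\partial^a_i)$. Then $\mathcal{M}$ is a Manin matrix. -/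
import Mathlib


/-- A Manin matrix: entries of a common column commute, and cross-commutators
of `2 × 2` submatrices agree. -/
def IsManin {A : Type*} [Ring A] {m n : Type*} (M : Matrix m n A) : Prop :=
  (∀ i k j, Commute (M i j) (M k j)) ∧
  (∀ i k j l, M i j * M k l - M k l * M i j = M k j * M i l - M i l * M k j)

/-- Polynomials in the variables `x^a_i` (`some (a,i)`) and `z` (`none`); the algebra
`𝒰[z, ∂_z]` is realised as differential operators on this polynomial ring. -/
abbrev P14 (M N : ℕ) : Type := MvPolynomial (Option (Fin M × Fin N)) ℂ

noncomputable def xop14 (M N : ℕ) (a : Fin M) (i : Fin N) : Module.End ℂ (P14 M N) :=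
  LinearMap.mulLeft ℂ (MvPolynomial.X (some (a, i)))

noncomputable def dop14 (M N : ℕ) (a : Fin M) (i : Fin N) : Module.End ℂ (P14 M N) :=
  (MvPolynomial.pderiv (R := ℂ) (some (a, i))).toLinearMap

noncomputable def zop14 (M N : ℕ) : Module.End ℂ (P14 M N) :=
  LinearMap.mulLeft ℂ (MvPolynomial.X none)

noncomputable def dzop14 (M N : ℕ) : Module.End ℂ (P14 M N) :=
  (MvPolynomial.pderiv (R := ℂ) (none : Option (Fin M × Fin N))).toLinearMap

namespace Manin14Aux

open MvPolynomial

variable {σ : Type*} [DecidableEq σ]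

noncomputable def Dv (σ : Type*) [DecidableEq σ] (u : σ) : Module.End ℂ (MvPolynomial σ ℂ) :=
  (MvPolynomial.pderiv (R := ℂ) u).toLinearMap

noncomputable def Xv (σ : Type*) [DecidableEq σ] (u : σ) : Module.End ℂ (MvPolynomial σ ℂ) :=
  LinearMap.mulLeft ℂ (MvPolynomial.X u)

lemma XX_comm (u v : σ) : Commute (Xv σ u) (Xv σ v) :=
  LinearMap.ext fun p => by simp [Xv, Module.End.mul_apply, mul_left_comm]

lemma pderiv_pderiv_comm (u v : σ) (p : MvPolynomial σ ℂ) :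
    pderiv u (pderiv v p) = pderiv v (pderiv u p) := by
  induction p using MvPolynomial.induction_on with
  | C a => simp
  | add p q hp hq => simp [hp, hq]
  | mul_X p k hp =>
      simp [pderiv_mul, hp, Pi.single_apply, apply_ite (pderiv (R := ℂ) u),
        apply_ite (pderiv (R := ℂ) v)]
      split_ifs <;> ring

lemma DD_comm (u v : σ) : Commute (Dv σ u) (Dv σ v) :=
  LinearMap.ext fun p => pderiv_pderiv_comm u v p

lemma DX (u v : σ) : Dv σ u * Xv σ v = Xv σ v * Dv σ u + if u = v then 1 else 0 := by
  rcases eq_or_ne u v with h | h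
  · subst h
    apply LinearMap.ext; intro p
    simp [Dv, Xv, Module.End.mul_apply, LinearMap.add_apply, pderiv_mul, add_comm]
  · apply LinearMap.ext; intro p
    simp [Dv, Xv, h, Module.End.mul_apply, pderiv_mul, pderiv_X_of_ne (Ne.symm h)]

lemma DX_comm (u v : σ) (h : u ≠ v) : Commute (Dv σ u) (Xv σ v) := by
  have h' := DX u v
  simp [h] at h'
  exact h'

lemma DX_cmt (u v : σ) :
    Dv σ u * Xv σ v - Xv σ v * Dv σ u = if u = v then 1 else 0 := by
  rw [DX, add_sub_cancel_left]

lemma cmt_sub_central {R : Type*} [Ring R] (a b x y : R)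
    (hx : ∀ r, Commute x r) (hy : ∀ r, Commute y r) :
    (a - x) * (b - y) - (b - y) * (a - x) = a * b - b * a := by
  simp only [mul_sub, sub_mul, (hx b).eq, (hy a).eq, (hx y).eq]
  abel

end Manin14Aux

open Manin14Aux

set_option maxHeartbeats 1000000 in
/-- The block matrix `𝓜 = (diag(∂_z - λ_a) X; ᵗD diag(z - z_i))` with entries in
`𝒰[z, ∂_z]` is a Manin matrix. -/
theorem stmt14 (M N : ℕ) (zi : Fin N → ℂ) (la : Fin M → ℂ)
    (hz : Function.Injective zi) (hl : Function.Injective la) :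
    IsManin (Matrix.fromBlocks
      (Matrix.diagonal fun a : Fin M =>
        dzop14 M N - algebraMap ℂ (Module.End ℂ (P14 M N)) (la a))
      (Matrix.of fun (a : Fin M) (i : Fin N) => xop14 M N a i)
      (Matrix.of fun (i : Fin N) (a : Fin M) => dop14 M N a i)
      (Matrix.diagonal fun i : Fin N =>
        zop14 M N - algebraMap ℂ (Module.End ℂ (P14 M N)) (zi i))) := by
  classical
  set σ' := Option (Fin M × Fin N) with hσ
  set A := Module.End ℂ (P14 M N) with hA
  have hxop : ∀ a i, xop14 M N a i = Xv σ' (some (a, i)) := fun _ _ => rfl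
  have hdop : ∀ a i, dop14 M N a i = Dv σ' (some (a, i)) := fun _ _ => rfl
  have hzop : zop14 M N = Xv σ' none := rfl
  have hdzop : dzop14 M N = Dv σ' (none : σ') := rfl
  have hcen : ∀ (c : ℂ) (r : A), Commute (algebraMap ℂ A c) r :=
    fun c r => Algebra.commutes c r
  -- commuting pairs
  have cDzDz : ∀ c c' : ℂ,
      Commute (dzop14 M N - algebraMap ℂ A c) (dzop14 M N - algebraMap ℂ A c') := by
    intro c c'
    exact (((DD_comm (σ := σ') none none).sub_right (hcen c' _).symm).sub_left
      (((hcen c _).sub_right (hcen c _))))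
  have cDzD : ∀ (c : ℂ) a i,
      Commute (dzop14 M N - algebraMap ℂ A c) (dop14 M N a i) := by
    intro c a i
    rw [hdop, hdzop]
    exact (DD_comm (σ := σ') none (some (a, i))).sub_left (hcen c _)
  have cDD' : ∀ a i b j, Commute (dop14 M N a i) (dop14 M N b j) := by
    intro a i b j; rw [hdop, hdop]; exact DD_comm _ _
  have cXX' : ∀ a i b j, Commute (xop14 M N a i) (xop14 M N b j) := by
    intro a i b j; rw [hxop, hxop]; exact XX_comm _ _
  have cXZ : ∀ (c : ℂ) a i,
      Commute (xop14 M N a i) (zop14 M N - algebraMap ℂ A c) := by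
    intro c a i
    rw [hxop, hzop]
    exact (XX_comm (σ := σ') (some (a, i)) none).sub_right (hcen c _).symm
  have cZZ : ∀ c c' : ℂ,
      Commute (zop14 M N - algebraMap ℂ A c) (zop14 M N - algebraMap ℂ A c') := by
    intro c c'
    rw [hzop]
    exact ((XX_comm (σ := σ') none none).sub_right (hcen c' _).symm).sub_left
      ((hcen c _).sub_right (hcen c _))
  have cDzX : ∀ (c : ℂ) a i,
      Commute (dzop14 M N - algebraMap ℂ A c) (xop14 M N a i) := by
    intro c a i
    rw [hdzop, hxop]
    exact (DX_comm (σ := σ') none (some (a, i)) (by simp)).sub_left (hcen c _)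
  have cDZ : ∀ (c : ℂ) a i,
      Commute (dop14 M N a i) (zop14 M N - algebraMap ℂ A c) := by
    intro c a i
    rw [hdop, hzop]
    exact (DX_comm (σ := σ') (some (a, i)) none (by simp)).sub_right (hcen c _).symm
  -- the key nontrivial commutators
  have key1 : ∀ c c' : ℂ,
      (dzop14 M N - algebraMap ℂ A c) * (zop14 M N - algebraMap ℂ A c') -
        (zop14 M N - algebraMap ℂ A c') * (dzop14 M N - algebraMap ℂ A c) = 1 := by
    intro c c'
    rw [cmt_sub_central _ _ _ _ (hcen c) (hcen c'), hdzop, hzop, DX_cmt, if_pos rfl]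
  have key2 : ∀ a i b j,
      dop14 M N a i * xop14 M N b j - xop14 M N b j * dop14 M N a i =
        if a = b ∧ i = j then 1 else 0 := by
    intro a i b j
    rw [hdop, hxop, DX_cmt]
    rcases eq_or_ne ((a, i)) ((b, j)) with h | h
    · rw [if_pos (congrArg some h), if_pos (by rw [Prod.ext_iff] at h; exact ⟨h.1, h.2⟩)]
    · rw [if_neg (fun he => h (Option.some_injective _ he)),
        if_neg (fun hc => h (Prod.ext_iff.mpr ⟨hc.1, hc.2⟩))]
  set E := Matrix.fromBlocks
      (Matrix.diagonal fun a : Fin M =>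
        dzop14 M N - algebraMap ℂ (Module.End ℂ (P14 M N)) (la a))
      (Matrix.of fun (a : Fin M) (i : Fin N) => xop14 M N a i)
      (Matrix.of fun (i : Fin N) (a : Fin M) => dop14 M N a i)
      (Matrix.diagonal fun i : Fin N =>
        zop14 M N - algebraMap ℂ (Module.End ℂ (P14 M N)) (zi i)) with hE
  have e11 : ∀ a c, E (Sum.inl a) (Sum.inl c) =
      if a = c then dzop14 M N - algebraMap ℂ A (la a) else 0 := by
    intro a c; rw [hE]; rw [Matrix.fromBlocks_apply₁₁, Matrix.diagonal_apply]
  have e12 : ∀ a j, E (Sum.inl a) (Sum.inr j) = xop14 M N a j := by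
    intro a j; rw [hE, Matrix.fromBlocks_apply₁₂]; rfl
  have e21 : ∀ i c, E (Sum.inr i) (Sum.inl c) = dop14 M N c i := by
    intro i c; rw [hE, Matrix.fromBlocks_apply₂₁]; rfl
  have e22 : ∀ i j, E (Sum.inr i) (Sum.inr j) =
      if i = j then zop14 M N - algebraMap ℂ A (zi i) else 0 := by
    intro i j; rw [hE]; rw [Matrix.fromBlocks_apply₂₂, Matrix.diagonal_apply]
  -- all left-column entries commute pairwise
  have hL : ∀ (P Q : Fin M ⊕ Fin N) (c d : Fin M),
      Commute (E P (Sum.inl c)) (E Q (Sum.inl d)) := by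
    rintro (a | i) (b | i') c d
    · rw [e11, e11]
      split_ifs
      · exact cDzDz _ _
      · exact Commute.zero_right _
      · exact Commute.zero_left _
      · exact Commute.zero_left _
    · rw [e11, e21]
      split_ifs
      · exact cDzD _ _ _
      · exact Commute.zero_left _
    · rw [e21, e11]
      split_ifs
      · exact (cDzD _ _ _).symm
      · exact Commute.zero_right _
    · rw [e21, e21]; exact cDD' _ _ _ _
  -- all right-column entries commute pairwise
  have hR : ∀ (P Q : Fin M ⊕ Fin N) (j l : Fin N),
      Commute (E P (Sum.inr j)) (E Q (Sum.inr l)) := by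
    rintro (a | i) (b | i') j l
    · rw [e12, e12]; exact cXX' _ _ _ _
    · rw [e12, e22]
      split_ifs
      · exact cXZ _ _ _
      · exact Commute.zero_right _
    · rw [e22, e12]
      split_ifs
      · exact (cXZ _ _ _).symm
      · exact Commute.zero_left _
    · rw [e22, e22]
      split_ifs
      · exact cZZ _ _
      · exact Commute.zero_right _
      · exact Commute.zero_left _
      · exact Commute.zero_left _
  -- mixed columns
  have hMix : ∀ (P Q : Fin M ⊕ Fin N) (c : Fin M) (j : Fin N),
      E P (Sum.inl c) * E Q (Sum.inr j) - E Q (Sum.inr j) * E P (Sum.inl c) =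
        E Q (Sum.inl c) * E P (Sum.inr j) - E P (Sum.inr j) * E Q (Sum.inl c) := by
    rintro (a | i) (b | i') c j
    · -- both rows from the top block: everything commutes
      rw [e11, e12, e11, e12]
      have h1 : Commute (if a = c then dzop14 M N - algebraMap ℂ A (la a) else 0)
          (xop14 M N b j) := by
        split_ifs
        · exact cDzX _ _ _
        · exact Commute.zero_left _
      have h2 : Commute (if b = c then dzop14 M N - algebraMap ℂ A (la b) else 0)
          (xop14 M N a j) := by
        split_ifs
        · exact cDzX _ _ _
        · exact Commute.zero_left _
      rw [h1.eq, h2.eq, sub_self, sub_self]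
    · -- top row & bottom row
      rw [e11, e22, e21, e12, key2]
      rcases eq_or_ne a c with h1 | h1 <;> rcases eq_or_ne i' j with h2 | h2
      · subst h1; subst h2
        simp only [eq_self_iff_true, and_self, if_true]
        exact key1 _ _
      · simp only [if_neg h2, if_neg (fun h => h2 h.2 : ¬(c = a ∧ i' = j)),
          mul_zero, zero_mul, sub_self]
      · simp only [if_neg h1, if_neg (fun h => h1 h.1.symm : ¬(c = a ∧ i' = j)),
          mul_zero, zero_mul, sub_self]
      · simp only [if_neg h1, if_neg (fun h => h1 h.1.symm : ¬(c = a ∧ i' = j)),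
          mul_zero, zero_mul, sub_self]
    · -- bottom row & top row
      rw [e21, e12, e11, e22, key2]
      rcases eq_or_ne b c with h1 | h1 <;> rcases eq_or_ne i j with h2 | h2
      · subst h1; subst h2
        simp only [eq_self_iff_true, and_self, if_true]
        exact (key1 _ _).symm
      · simp only [if_neg h2, if_neg (fun h => h2 h.2 : ¬(c = b ∧ i = j)),
          mul_zero, zero_mul, sub_self]
      · simp only [if_neg h1, if_neg (fun h => h1 h.1.symm : ¬(c = b ∧ i = j)),
          mul_zero, zero_mul, sub_self]
      · simp only [if_neg h1, if_neg (fun h => h1 h.1.symm : ¬(c = b ∧ i = j)),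
          mul_zero, zero_mul, sub_self]
    · -- both rows from the bottom block
      rw [e21, e22, e21, e22]
      have h1 : Commute (dop14 M N c i)
          (if i' = j then zop14 M N - algebraMap ℂ A (zi i') else 0) := by
        split_ifs
        · exact cDZ _ _ _
        · exact Commute.zero_right _
      have h2 : Commute (dop14 M N c i')
          (if i = j then zop14 M N - algebraMap ℂ A (zi i) else 0) := by
        split_ifs
        · exact cDZ _ _ _
        · exact Commute.zero_right _
      rw [h1.eq, h2.eq, sub_self, sub_self]
  constructor
  · rintro I K (c | j)
    · exact hL I K c c
    · exact hR I K j j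
  · rintro I K (c | j) (d | l)
    · rw [(hL I K c d).eq, (hL K I c d).eq, sub_self, sub_self]
    · exact hMix I K c l
    · have h := hMix K I d j
      have := congrArg Neg.neg h
      simpa [neg_sub] using this
    · rw [(hR I K j l).eq, (hR K I j l).eq, sub_self, sub_self]
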